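/- Let $A$ be a bialgebra and $\beta : A \otimes A \to K$ a linear map. Define the twisted multiplication $x *_\beta y = \beta(x_{(1)} \otimes y_{(1)})\, x_{(2)} y_{(2)}$ on $A$. Then $\beta$ satisfies the unital 2-cocycle conditions $\beta(y_{(1)}\otimes z_{(1)})\beta(x \otimes y_{(2)}z_{(2)}) = \beta(x_{(1)}\otimes y_{(1)})\beta(x_{(2)}y_{(2)}\otimes z)$ and $\beta(x \otimes 1) = \beta(1\otimes x) = \varepsilon(x)$ if and only if $(A, *_\beta)$ is an associative unital algebra with unit $1_A$. -/

import Mathlib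

open TensorProduct

variable {K A : Type*}

section Defs

variable [CommRing K] [Ring A] [Bialgebra K A]

/-- The comultiplication of the tensor product coalgebra `A ⊗ A`:
`Δ(x ⊗ y) = (x₁ ⊗ y₁) ⊗ (x₂ ⊗ y₂)`. -/
noncomputable def comul2 : (A ⊗[K] A) →ₗ[K] (A ⊗[K] A) ⊗[K] (A ⊗[K] A) :=
  (TensorProduct.tensorTensorTensorComm K A A A A).toLinearMap ∘ₗ
    (TensorProduct.map Coalgebra.comul Coalgebra.comul)

/-- The comultiplication of the tensor product coalgebra `A ⊗ (A ⊗ A)`. -/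
noncomputable def comul3 : (A ⊗[K] (A ⊗[K] A)) →ₗ[K]
    (A ⊗[K] (A ⊗[K] A)) ⊗[K] (A ⊗[K] (A ⊗[K] A)) :=
  (TensorProduct.tensorTensorTensorComm K A A (A ⊗[K] A) (A ⊗[K] A)).toLinearMap ∘ₗ
    (TensorProduct.map Coalgebra.comul comul2)

/-- Convolution product on linear maps `A ⊗ A → K`. -/
noncomputable def conv2 (f g : (A ⊗[K] A) →ₗ[K] K) : (A ⊗[K] A) →ₗ[K] K :=
  (TensorProduct.lid K K).toLinearMap ∘ₗ (TensorProduct.map f g) ∘ₗ comul2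

/-- Convolution product on linear maps `A ⊗ (A ⊗ A) → K`. -/
noncomputable def conv3 (f g : (A ⊗[K] (A ⊗[K] A)) →ₗ[K] K) :
    (A ⊗[K] (A ⊗[K] A)) →ₗ[K] K :=
  (TensorProduct.lid K K).toLinearMap ∘ₗ (TensorProduct.map f g) ∘ₗ comul3

/-- Convolution product on linear maps `A ⊗ A → A`. -/
noncomputable def conv2A (f g : (A ⊗[K] A) →ₗ[K] A) : (A ⊗[K] A) →ₗ[K] A :=
  (LinearMap.mul' K A) ∘ₗ (TensorProduct.map f g) ∘ₗ comul2

/-- The 2-cocycle equation for `β` relative to a multiplication map `m : A ⊗ A → A`: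
`β(y₁ ⊗ z₁) β(x ⊗ y₂z₂) = β(x₁ ⊗ y₁) β(x₂y₂ ⊗ z)` as maps on `A ⊗ (A ⊗ A)`,
written in convolution form `(ε ⊗ β) * (β ∘ (id ⊗ m)) = (β ⊗ ε) * (β ∘ (m ⊗ id))`. -/
noncomputable def IsCocycleEq (m : (A ⊗[K] A) →ₗ[K] A) (β : (A ⊗[K] A) →ₗ[K] K) : Prop :=
  conv3 ((TensorProduct.lid K K).toLinearMap ∘ₗ TensorProduct.map Coalgebra.counit β)
      (β ∘ₗ TensorProduct.map LinearMap.id m) =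
    conv3 (((TensorProduct.lid K K).toLinearMap ∘ₗ TensorProduct.map β Coalgebra.counit)
        ∘ₗ (TensorProduct.assoc K A A A).symm.toLinearMap)
      ((β ∘ₗ TensorProduct.map m LinearMap.id) ∘ₗ
        (TensorProduct.assoc K A A A).symm.toLinearMap)

/-- The normalization condition `β(x ⊗ 1) = β(1 ⊗ x) = ε(x)`. -/
def IsUnital (β : (A ⊗[K] A) →ₗ[K] K) : Prop :=
  ∀ x : A, β (x ⊗ₜ[K] (1 : A)) = Coalgebra.counit (R := K) x ∧
    β ((1 : A) ⊗ₜ[K] x) = Coalgebra.counit (R := K) x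

/-- The singly twisted multiplication `x *_β y = β(x₁ ⊗ y₁) x₂ y₂`. -/
noncomputable def mulBeta (β : (A ⊗[K] A) →ₗ[K] K) : (A ⊗[K] A) →ₗ[K] A :=
  conv2A ((Algebra.linearMap K A) ∘ₗ β) (LinearMap.mul' K A)

end Defs

section Aux



open Coalgebra

variable [CommRing K] [Ring A] [Bialgebra K A] (β : (A ⊗[K] A) →ₗ[K] K)

variable {τ0 τ1 τ2 τ3 τ4 τ5 τ6 : Type*}

lemma sum3_rev {ι₁ ι₂ ι₃ M : Type*} [AddCommMonoid M] (s : Finset ι₁) (t : Finset ι₂)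
    (u : Finset ι₃) (f : ι₁ → ι₂ → ι₃ → M) :
    ∑ b ∈ t, ∑ c ∈ u, ∑ a ∈ s, f a b c = ∑ a ∈ s, ∑ b ∈ t, ∑ c ∈ u, f a b c := by
  refine Eq.trans (Finset.sum_congr rfl fun b _ => ?_) (by rw [Finset.sum_comm])
  rw [Finset.sum_comm]

/-- A representation of `1`. -/
noncomputable def reprOne : Coalgebra.Repr K (1 : A) ℕ where
  index := ({0} : Finset ℕ)
  left _ := 1
  right _ := 1
  eq := by simp [Algebra.TensorProduct.one_def]


variable {M : Type*} [AddCommMonoid M] [Module K M]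

lemma collapse_left (φ : A →ₗ[K] M) {a : A} (r : Coalgebra.Repr K a τ0) :
    ∑ i ∈ r.index, counit (R := K) (r.left i) • φ (r.right i) = φ a := by
  have h := sum_counit_tmul_eq r
  have h2 := congrArg (TensorProduct.lid K M ∘ (LinearMap.lTensor K φ)) h
  simp only [Function.comp_apply, map_sum, LinearMap.lTensor_tmul,
    TensorProduct.lid_tmul, one_smul] at h2
  exact h2

lemma collapse_right (φ : A →ₗ[K] M) {a : A} (r : Coalgebra.Repr K a τ0) :
    ∑ i ∈ r.index, counit (R := K) (r.right i) • φ (r.left i) = φ a := by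
  have h := sum_tmul_counit_eq r
  have h2 := congrArg (TensorProduct.rid K M ∘ (LinearMap.rTensor K φ)) h
  simp only [Function.comp_apply, map_sum, LinearMap.rTensor_tmul,
    TensorProduct.rid_tmul, one_smul] at h2
  exact h2

lemma coassoc_transport (f g : A →ₗ[K] K) (h : A →ₗ[K] M) {a : A}
    (r : Coalgebra.Repr K a τ0) (r₁ : ∀ i, Coalgebra.Repr K (r.left i) τ1)
    (r₂ : ∀ i, Coalgebra.Repr K (r.right i) τ2) :
    ∑ i ∈ r.index, ∑ j ∈ (r₁ i).index,
        f ((r₁ i).left j) • (g ((r₁ i).right j) • h (r.right i)) =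
      ∑ i ∈ r.index, ∑ j ∈ (r₂ i).index,
        f (r.left i) • (g ((r₂ i).left j) • h ((r₂ i).right j)) := by
  have key := Coalgebra.sum_tmul_tmul_eq r r₁ r₂
  set Φ : A ⊗[K] (A ⊗[K] A) →ₗ[K] M :=
    (TensorProduct.lid K M).toLinearMap ∘ₗ
      TensorProduct.map f ((TensorProduct.lid K M).toLinearMap ∘ₗ TensorProduct.map g h)
  have h2 := congrArg Φ key
  simpa [Φ, map_sum, smul_smul, mul_comm] using h2

lemma comul2_tmul {a b : A} (ra : Coalgebra.Repr K a τ0) (rb : Coalgebra.Repr K b τ1) :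
    comul2 (a ⊗ₜ[K] b) = ∑ i ∈ ra.index, ∑ j ∈ rb.index,
      (ra.left i ⊗ₜ[K] rb.left j) ⊗ₜ[K] (ra.right i ⊗ₜ[K] rb.right j) := by
  simp only [comul2, LinearMap.comp_apply, TensorProduct.map_tmul]
  rw [← ra.eq, ← rb.eq]
  simp only [TensorProduct.sum_tmul, TensorProduct.tmul_sum, map_sum,
    LinearEquiv.coe_coe, TensorProduct.tensorTensorTensorComm_tmul]
  rw [Finset.sum_comm]

lemma comul3_tmul {x y z : A} (rx : Coalgebra.Repr K x τ0) (ry : Coalgebra.Repr K y τ1)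
    (rz : Coalgebra.Repr K z τ2) :
    comul3 (x ⊗ₜ[K] (y ⊗ₜ[K] z)) = ∑ i ∈ rx.index, ∑ j ∈ ry.index, ∑ n ∈ rz.index,
      (rx.left i ⊗ₜ[K] (ry.left j ⊗ₜ[K] rz.left n)) ⊗ₜ[K]
        (rx.right i ⊗ₜ[K] (ry.right j ⊗ₜ[K] rz.right n)) := by
  simp only [comul3, LinearMap.comp_apply, TensorProduct.map_tmul]
  rw [← rx.eq, comul2_tmul ry rz]
  simp only [TensorProduct.sum_tmul, TensorProduct.tmul_sum, map_sum,
    LinearEquiv.coe_coe, TensorProduct.tensorTensorTensorComm_tmul]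
  exact sum3_rev rx.index ry.index rz.index fun i j n =>
    (rx.left i ⊗ₜ[K] (ry.left j ⊗ₜ[K] rz.left n)) ⊗ₜ[K]
      (rx.right i ⊗ₜ[K] (ry.right j ⊗ₜ[K] rz.right n))


lemma conv3_tmul (f g : (A ⊗[K] (A ⊗[K] A)) →ₗ[K] K) {x y z : A}
    (rx : Coalgebra.Repr K x τ0) (ry : Coalgebra.Repr K y τ1) (rz : Coalgebra.Repr K z τ2) :
    conv3 f g (x ⊗ₜ[K] (y ⊗ₜ[K] z)) = ∑ i ∈ rx.index, ∑ j ∈ ry.index, ∑ n ∈ rz.index,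
      f (rx.left i ⊗ₜ[K] (ry.left j ⊗ₜ[K] rz.left n)) •
        g (rx.right i ⊗ₜ[K] (ry.right j ⊗ₜ[K] rz.right n)) := by
  simp only [conv3, LinearMap.comp_apply, comul3_tmul rx ry rz, map_sum,
    TensorProduct.map_tmul, LinearEquiv.coe_coe, TensorProduct.lid_tmul]

lemma mulBeta_tmul (β : (A ⊗[K] A) →ₗ[K] K) {a b : A} (ra : Coalgebra.Repr K a τ0)
    (rb : Coalgebra.Repr K b τ1) :
    mulBeta β (a ⊗ₜ[K] b) = ∑ i ∈ ra.index, ∑ j ∈ rb.index,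
      β (ra.left i ⊗ₜ[K] rb.left j) • (ra.right i * rb.right j) := by
  simp only [mulBeta, conv2A, LinearMap.comp_apply, comul2_tmul ra rb, map_sum,
    TensorProduct.map_tmul, Algebra.linearMap_apply, LinearMap.mul'_apply]
  simp [Algebra.smul_def]

lemma counit_mulBeta (β : (A ⊗[K] A) →ₗ[K] K) {a b : A} (ra : Coalgebra.Repr K a τ0)
    (rb : Coalgebra.Repr K b τ1) :
    counit (R := K) (mulBeta β (a ⊗ₜ[K] b)) = β (a ⊗ₜ[K] b) := by
  rw [mulBeta_tmul β ra rb]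
  rw [map_sum]
  have : ∀ i ∈ ra.index, (counit (R := K) (∑ j ∈ rb.index,
      β (ra.left i ⊗ₜ[K] rb.left j) • (ra.right i * rb.right j)))
      = counit (R := K) (ra.right i) •
        (β ∘ₗ TensorProduct.mk K A A (ra.left i)) b := by
    intro i _
    rw [map_sum, ← collapse_right (β ∘ₗ TensorProduct.mk K A A (ra.left i)) rb,
      Finset.smul_sum]
    refine Finset.sum_congr rfl fun j _ => ?_
    simp only [map_smul, Bialgebra.counit_mul, LinearMap.comp_apply,
      TensorProduct.mk_apply, smul_eq_mul]
    ring
  rw [Finset.sum_congr rfl this]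
  have h2 := collapse_right (β ∘ₗ (TensorProduct.mk K A A).flip b) ra
  simpa using h2

@[simp] lemma Repr.mul_index {a b : A} (ra : Coalgebra.Repr K a τ0) (rb : Coalgebra.Repr K b τ1) :
    (ra.mul rb).index = ra.index ×ˢ rb.index := rfl
@[simp] lemma Repr.mul_left {a b : A} (ra : Coalgebra.Repr K a τ0) (rb : Coalgebra.Repr K b τ1)
    (p) : (ra.mul rb).left p = ra.left p.1 * rb.left p.2 := rfl
@[simp] lemma Repr.mul_right {a b : A} (ra : Coalgebra.Repr K a τ0) (rb : Coalgebra.Repr K b τ1)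
    (p) : (ra.mul rb).right p = ra.right p.1 * rb.right p.2 := rfl
@[simp] lemma reprOne_index : (reprOne (K := K) (A := A)).index = ({0} : Finset ℕ) := rfl
@[simp] lemma reprOne_left (i : ℕ) : (reprOne (K := K) (A := A)).left i = 1 := rfl
@[simp] lemma reprOne_right (i : ℕ) : (reprOne (K := K) (A := A)).right i = 1 := rfl

section Reorder

variable {M : Type*} [AddCommMonoid M]

lemma reorderL1 {ι1 ι2 ι5 : Type*} {κ : ι1 → Type*} {lam : ι2 → Type*}
    (s : Finset ι1) (t : Finset ι2) (u : Finset ι5) (P : ∀ i, Finset (κ i))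
    (Q : ∀ j, Finset (lam j)) (F : ∀ (i : ι1) (j : ι2), κ i → lam j → ι5 → M) :
    (∑ i ∈ s, ∑ j ∈ t, ∑ k ∈ P i, ∑ l ∈ Q j, ∑ n ∈ u, F i j k l n) = ∑ j ∈ t, ∑ l ∈ Q j, ∑ n ∈ u, ∑ i ∈ s, ∑ k ∈ P i, F i j k l n :=
  calc ∑ i ∈ s, ∑ j ∈ t, ∑ k ∈ P i, ∑ l ∈ Q j, ∑ n ∈ u, F i j k l n
      _ = ∑ i ∈ s, ∑ j ∈ t, ∑ l ∈ Q j, ∑ k ∈ P i, ∑ n ∈ u, F i j k l n := Finset.sum_congr rfl fun i _ => Finset.sum_congr rfl fun j _ => Finset.sum_comm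
      _ = ∑ j ∈ t, ∑ i ∈ s, ∑ l ∈ Q j, ∑ k ∈ P i, ∑ n ∈ u, F i j k l n := Finset.sum_comm
      _ = ∑ j ∈ t, ∑ l ∈ Q j, ∑ i ∈ s, ∑ k ∈ P i, ∑ n ∈ u, F i j k l n := Finset.sum_congr rfl fun j _ => Finset.sum_comm
      _ = ∑ j ∈ t, ∑ l ∈ Q j, ∑ i ∈ s, ∑ n ∈ u, ∑ k ∈ P i, F i j k l n := Finset.sum_congr rfl fun j _ => Finset.sum_congr rfl fun l _ => Finset.sum_congr rfl fun i _ => Finset.sum_comm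
      _ = ∑ j ∈ t, ∑ l ∈ Q j, ∑ n ∈ u, ∑ i ∈ s, ∑ k ∈ P i, F i j k l n := Finset.sum_congr rfl fun j _ => Finset.sum_congr rfl fun l _ => Finset.sum_comm

lemma reorderL2 {ι1 ι2 ι5 : Type*} {κ : ι1 → Type*} {lam : ι2 → Type*}
    (s : Finset ι1) (t : Finset ι2) (u : Finset ι5) (P : ∀ i, Finset (κ i))
    (Q : ∀ j, Finset (lam j)) (F : ∀ (i : ι1) (j : ι2), κ i → lam j → ι5 → M) :
    (∑ j ∈ t, ∑ l ∈ Q j, ∑ n ∈ u, ∑ i ∈ s, ∑ k ∈ P i, F i j k l n) = ∑ n ∈ u, ∑ i ∈ s, ∑ k ∈ P i, ∑ j ∈ t, ∑ l ∈ Q j, F i j k l n :=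
  calc ∑ j ∈ t, ∑ l ∈ Q j, ∑ n ∈ u, ∑ i ∈ s, ∑ k ∈ P i, F i j k l n
      _ = ∑ j ∈ t, ∑ n ∈ u, ∑ l ∈ Q j, ∑ i ∈ s, ∑ k ∈ P i, F i j k l n := Finset.sum_congr rfl fun j _ => Finset.sum_comm
      _ = ∑ n ∈ u, ∑ j ∈ t, ∑ l ∈ Q j, ∑ i ∈ s, ∑ k ∈ P i, F i j k l n := Finset.sum_comm
      _ = ∑ n ∈ u, ∑ j ∈ t, ∑ i ∈ s, ∑ l ∈ Q j, ∑ k ∈ P i, F i j k l n := Finset.sum_congr rfl fun n _ => Finset.sum_congr rfl fun j _ => Finset.sum_comm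
      _ = ∑ n ∈ u, ∑ i ∈ s, ∑ j ∈ t, ∑ l ∈ Q j, ∑ k ∈ P i, F i j k l n := Finset.sum_congr rfl fun n _ => Finset.sum_comm
      _ = ∑ n ∈ u, ∑ i ∈ s, ∑ j ∈ t, ∑ k ∈ P i, ∑ l ∈ Q j, F i j k l n := Finset.sum_congr rfl fun n _ => Finset.sum_congr rfl fun i _ => Finset.sum_congr rfl fun j _ => Finset.sum_comm
      _ = ∑ n ∈ u, ∑ i ∈ s, ∑ k ∈ P i, ∑ j ∈ t, ∑ l ∈ Q j, F i j k l n := Finset.sum_congr rfl fun n _ => Finset.sum_congr rfl fun i _ => Finset.sum_comm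

lemma reorderL3 {ι1 ι2 ι5 : Type*} {κ : ι1 → Type*} {lam : ι2 → Type*}
    (s : Finset ι1) (t : Finset ι2) (u : Finset ι5) (P : ∀ i, Finset (κ i))
    (Q : ∀ j, Finset (lam j)) (F : ∀ (i : ι1) (j : ι2), κ i → lam j → ι5 → M) :
    (∑ n ∈ u, ∑ i ∈ s, ∑ k ∈ P i, ∑ j ∈ t, ∑ l ∈ Q j, F i j k l n) = ∑ i ∈ s, ∑ j ∈ t, ∑ n ∈ u, ∑ k ∈ P i, ∑ l ∈ Q j, F i j k l n :=
  calc ∑ n ∈ u, ∑ i ∈ s, ∑ k ∈ P i, ∑ j ∈ t, ∑ l ∈ Q j, F i j k l n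
      _ = ∑ i ∈ s, ∑ n ∈ u, ∑ k ∈ P i, ∑ j ∈ t, ∑ l ∈ Q j, F i j k l n := Finset.sum_comm
      _ = ∑ i ∈ s, ∑ n ∈ u, ∑ j ∈ t, ∑ k ∈ P i, ∑ l ∈ Q j, F i j k l n := Finset.sum_congr rfl fun i _ => Finset.sum_congr rfl fun n _ => Finset.sum_comm
      _ = ∑ i ∈ s, ∑ j ∈ t, ∑ n ∈ u, ∑ k ∈ P i, ∑ l ∈ Q j, F i j k l n := Finset.sum_congr rfl fun i _ => Finset.sum_comm

lemma reorderR1 {ι1 ι2 ι5 : Type*} {mu : ι2 → Type*} {nu : ι5 → Type*}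
    (s : Finset ι1) (t : Finset ι2) (u : Finset ι5) (Q : ∀ j, Finset (mu j))
    (R : ∀ n, Finset (nu n)) (F : ∀ (i : ι1) (j : ι2), mu j → ∀ (n : ι5), nu n → M) :
    (∑ j ∈ t, ∑ n ∈ u, ∑ i ∈ s, ∑ k ∈ Q j, ∑ l ∈ R n, F i j k n l) = ∑ n ∈ u, ∑ l ∈ R n, ∑ i ∈ s, ∑ j ∈ t, ∑ k ∈ Q j, F i j k n l :=
  calc ∑ j ∈ t, ∑ n ∈ u, ∑ i ∈ s, ∑ k ∈ Q j, ∑ l ∈ R n, F i j k n l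
      _ = ∑ n ∈ u, ∑ j ∈ t, ∑ i ∈ s, ∑ k ∈ Q j, ∑ l ∈ R n, F i j k n l := Finset.sum_comm
      _ = ∑ n ∈ u, ∑ j ∈ t, ∑ i ∈ s, ∑ l ∈ R n, ∑ k ∈ Q j, F i j k n l := Finset.sum_congr rfl fun n _ => Finset.sum_congr rfl fun j _ => Finset.sum_congr rfl fun i _ => Finset.sum_comm
      _ = ∑ n ∈ u, ∑ j ∈ t, ∑ l ∈ R n, ∑ i ∈ s, ∑ k ∈ Q j, F i j k n l := Finset.sum_congr rfl fun n _ => Finset.sum_congr rfl fun j _ => Finset.sum_comm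
      _ = ∑ n ∈ u, ∑ l ∈ R n, ∑ j ∈ t, ∑ i ∈ s, ∑ k ∈ Q j, F i j k n l := Finset.sum_congr rfl fun n _ => Finset.sum_comm
      _ = ∑ n ∈ u, ∑ l ∈ R n, ∑ i ∈ s, ∑ j ∈ t, ∑ k ∈ Q j, F i j k n l := Finset.sum_congr rfl fun n _ => Finset.sum_congr rfl fun l _ => Finset.sum_comm

lemma reorderR2 {ι1 ι2 ι5 : Type*} {mu : ι2 → Type*} {nu : ι5 → Type*}
    (s : Finset ι1) (t : Finset ι2) (u : Finset ι5) (Q : ∀ j, Finset (mu j))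
    (R : ∀ n, Finset (nu n)) (F : ∀ (i : ι1) (j : ι2), mu j → ∀ (n : ι5), nu n → M) :
    (∑ n ∈ u, ∑ l ∈ R n, ∑ i ∈ s, ∑ j ∈ t, ∑ k ∈ Q j, F i j k n l) = ∑ i ∈ s, ∑ j ∈ t, ∑ k ∈ Q j, ∑ n ∈ u, ∑ l ∈ R n, F i j k n l :=
  calc ∑ n ∈ u, ∑ l ∈ R n, ∑ i ∈ s, ∑ j ∈ t, ∑ k ∈ Q j, F i j k n l
      _ = ∑ n ∈ u, ∑ i ∈ s, ∑ l ∈ R n, ∑ j ∈ t, ∑ k ∈ Q j, F i j k n l := Finset.sum_congr rfl fun n _ => Finset.sum_comm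
      _ = ∑ i ∈ s, ∑ n ∈ u, ∑ l ∈ R n, ∑ j ∈ t, ∑ k ∈ Q j, F i j k n l := Finset.sum_comm
      _ = ∑ i ∈ s, ∑ n ∈ u, ∑ j ∈ t, ∑ l ∈ R n, ∑ k ∈ Q j, F i j k n l := Finset.sum_congr rfl fun i _ => Finset.sum_congr rfl fun n _ => Finset.sum_comm
      _ = ∑ i ∈ s, ∑ n ∈ u, ∑ j ∈ t, ∑ k ∈ Q j, ∑ l ∈ R n, F i j k n l := Finset.sum_congr rfl fun i _ => Finset.sum_congr rfl fun n _ => Finset.sum_congr rfl fun j _ => Finset.sum_comm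
      _ = ∑ i ∈ s, ∑ j ∈ t, ∑ n ∈ u, ∑ k ∈ Q j, ∑ l ∈ R n, F i j k n l := Finset.sum_congr rfl fun i _ => Finset.sum_comm
      _ = ∑ i ∈ s, ∑ j ∈ t, ∑ k ∈ Q j, ∑ n ∈ u, ∑ l ∈ R n, F i j k n l := Finset.sum_congr rfl fun i _ => Finset.sum_congr rfl fun j _ => Finset.sum_comm

lemma reorderR3 {ι1 ι2 ι5 : Type*} {mu : ι2 → Type*} {nu : ι5 → Type*}
    (s : Finset ι1) (t : Finset ι2) (u : Finset ι5) (Q : ∀ j, Finset (mu j))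
    (R : ∀ n, Finset (nu n)) (F : ∀ (i : ι1) (j : ι2), mu j → ∀ (n : ι5), nu n → M) :
    (∑ i ∈ s, ∑ j ∈ t, ∑ k ∈ Q j, ∑ n ∈ u, ∑ l ∈ R n, F i j k n l) = ∑ i ∈ s, ∑ j ∈ t, ∑ n ∈ u, ∑ k ∈ Q j, ∑ l ∈ R n, F i j k n l :=
  calc ∑ i ∈ s, ∑ j ∈ t, ∑ k ∈ Q j, ∑ n ∈ u, ∑ l ∈ R n, F i j k n l
      _ = ∑ i ∈ s, ∑ j ∈ t, ∑ n ∈ u, ∑ k ∈ Q j, ∑ l ∈ R n, F i j k n l := Finset.sum_congr rfl fun i _ => Finset.sum_congr rfl fun j _ => Finset.sum_comm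

end Reorder

open Coalgebra

lemma mulBeta_tmul_mulLeft (β : (A ⊗[K] A) →ₗ[K] K) {a b c : A} (ra : Coalgebra.Repr K a τ0)
    (rb : Coalgebra.Repr K b τ1) (rc : Coalgebra.Repr K c τ2) :
    mulBeta β ((a * b) ⊗ₜ[K] c) = ∑ k ∈ ra.index, ∑ l ∈ rb.index, ∑ n ∈ rc.index,
      β ((ra.left k * rb.left l) ⊗ₜ[K] rc.left n) •
        (ra.right k * rb.right l * rc.right n) := by
  rw [mulBeta_tmul β (ra.mul rb) rc]
  exact Finset.sum_product _ _ _

lemma mulBeta_tmul_mulRight (β : (A ⊗[K] A) →ₗ[K] K) {a b c : A} (ra : Coalgebra.Repr K a τ0)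
    (rb : Coalgebra.Repr K b τ1) (rc : Coalgebra.Repr K c τ2) :
    mulBeta β (a ⊗ₜ[K] (b * c)) = ∑ i ∈ ra.index, ∑ k ∈ rb.index, ∑ l ∈ rc.index,
      β (ra.left i ⊗ₜ[K] (rb.left k * rc.left l)) •
        (ra.right i * (rb.right k * rc.right l)) := by
  rw [mulBeta_tmul β ra (rb.mul rc)]
  exact Finset.sum_congr rfl fun i _ => Finset.sum_product _ _ _

/-- Value-level coassociativity transport for the `(x*y)*z` side, `x`-legs. -/
lemma transport_x (β : (A ⊗[K] A) →ₗ[K] K) {a : A} (r : Coalgebra.Repr K a τ0)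
    (r₁ : ∀ i, Coalgebra.Repr K (r.left i) τ1) (r₂ : ∀ i, Coalgebra.Repr K (r.right i) τ2)
    (Y1 Y2 Y3 Z1 Z2 : A) :
    ∑ i ∈ r.index, ∑ k ∈ (r₂ i).index, β (r.left i ⊗ₜ[K] Y1) •
        (β (((r₂ i).left k * Y2) ⊗ₜ[K] Z1) • ((r₂ i).right k * Y3 * Z2))
    = ∑ i ∈ r.index, ∑ p ∈ (r₁ i).index, β ((r₁ i).left p ⊗ₜ[K] Y1) •
        (β (((r₁ i).right p * Y2) ⊗ₜ[K] Z1) • (r.right i * Y3 * Z2)) := by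
  have h := coassoc_transport (β ∘ₗ (TensorProduct.mk K A A).flip Y1)
    (β ∘ₗ (TensorProduct.mk K A A).flip Z1 ∘ₗ LinearMap.mulRight K Y2)
    (LinearMap.mulRight K Z2 ∘ₗ LinearMap.mulRight K Y3) r r₁ r₂
  simpa only [LinearMap.comp_apply, LinearMap.flip_apply, TensorProduct.mk_apply,
    LinearMap.mulRight_apply] using h.symm

/-- Value-level coassociativity transport for the `(x*y)*z` side, `y`-legs. -/
lemma transport_y (β : (A ⊗[K] A) →ₗ[K] K) {a : A} (r : Coalgebra.Repr K a τ0)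
    (r₁ : ∀ i, Coalgebra.Repr K (r.left i) τ1) (r₂ : ∀ i, Coalgebra.Repr K (r.right i) τ2)
    (X1 X2 X3 Z1 Z2 : A) :
    ∑ j ∈ r.index, ∑ l ∈ (r₂ j).index, β (X1 ⊗ₜ[K] r.left j) •
        (β ((X2 * (r₂ j).left l) ⊗ₜ[K] Z1) • (X3 * (r₂ j).right l * Z2))
    = ∑ j ∈ r.index, ∑ q ∈ (r₁ j).index, β (X1 ⊗ₜ[K] (r₁ j).left q) •
        (β ((X2 * (r₁ j).right q) ⊗ₜ[K] Z1) • (X3 * r.right j * Z2)) := by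
  have h := coassoc_transport (β ∘ₗ TensorProduct.mk K A A X1)
    (β ∘ₗ (TensorProduct.mk K A A).flip Z1 ∘ₗ LinearMap.mulLeft K X2)
    (LinearMap.mulRight K Z2 ∘ₗ LinearMap.mulLeft K X3) r r₁ r₂
  simpa only [LinearMap.comp_apply, LinearMap.flip_apply, TensorProduct.mk_apply,
    LinearMap.mulRight_apply, LinearMap.mulLeft_apply] using h.symm

/-- Value-level coassociativity transport for the `x*(y*z)` side, `y`-legs. -/
lemma transport_y' (β : (A ⊗[K] A) →ₗ[K] K) {a : A} (r : Coalgebra.Repr K a τ0)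
    (r₁ : ∀ i, Coalgebra.Repr K (r.left i) τ1) (r₂ : ∀ i, Coalgebra.Repr K (r.right i) τ2)
    (X1 X2 Z1 Z2 Z3 : A) :
    ∑ j ∈ r.index, ∑ k ∈ (r₂ j).index, β (r.left j ⊗ₜ[K] Z1) •
        (β (X1 ⊗ₜ[K] ((r₂ j).left k * Z2)) • (X2 * ((r₂ j).right k * Z3)))
    = ∑ j ∈ r.index, ∑ q ∈ (r₁ j).index, β ((r₁ j).left q ⊗ₜ[K] Z1) •
        (β (X1 ⊗ₜ[K] ((r₁ j).right q * Z2)) • (X2 * (r.right j * Z3))) := by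
  have h := coassoc_transport (β ∘ₗ (TensorProduct.mk K A A).flip Z1)
    (β ∘ₗ TensorProduct.mk K A A X1 ∘ₗ LinearMap.mulRight K Z2)
    (LinearMap.mulLeft K X2 ∘ₗ LinearMap.mulRight K Z3) r r₁ r₂
  simpa only [LinearMap.comp_apply, LinearMap.flip_apply, TensorProduct.mk_apply,
    LinearMap.mulRight_apply, LinearMap.mulLeft_apply] using h.symm

/-- Value-level coassociativity transport for the `x*(y*z)` side, `z`-legs. -/
lemma transport_z' (β : (A ⊗[K] A) →ₗ[K] K) {a : A} (r : Coalgebra.Repr K a τ0)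
    (r₁ : ∀ i, Coalgebra.Repr K (r.left i) τ1) (r₂ : ∀ i, Coalgebra.Repr K (r.right i) τ2)
    (X1 X2 Y1 Y2 Y3 : A) :
    ∑ n ∈ r.index, ∑ l ∈ (r₂ n).index, β (Y1 ⊗ₜ[K] r.left n) •
        (β (X1 ⊗ₜ[K] (Y2 * (r₂ n).left l)) • (X2 * (Y3 * (r₂ n).right l)))
    = ∑ n ∈ r.index, ∑ s ∈ (r₁ n).index, β (Y1 ⊗ₜ[K] (r₁ n).left s) •
        (β (X1 ⊗ₜ[K] (Y2 * (r₁ n).right s)) • (X2 * (Y3 * r.right n))) := by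
  have h := coassoc_transport (β ∘ₗ TensorProduct.mk K A A Y1)
    (β ∘ₗ TensorProduct.mk K A A X1 ∘ₗ LinearMap.mulLeft K Y2)
    (LinearMap.mulLeft K X2 ∘ₗ LinearMap.mulLeft K Y3) r r₁ r₂
  simpa only [LinearMap.comp_apply, LinearMap.flip_apply, TensorProduct.mk_apply,
    LinearMap.mulRight_apply, LinearMap.mulLeft_apply] using h.symm

set_option maxHeartbeats 1000000 in
lemma left_expand (β : (A ⊗[K] A) →ₗ[K] K) {x y z : A}
    (rx : Coalgebra.Repr K x τ0) (ry : Coalgebra.Repr K y τ1) (rz : Coalgebra.Repr K z τ2)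
    (rx1 : ∀ i, Coalgebra.Repr K (rx.left i) τ3) (rx2 : ∀ i, Coalgebra.Repr K (rx.right i) τ4)
    (ry1 : ∀ j, Coalgebra.Repr K (ry.left j) τ5) (ry2 : ∀ j, Coalgebra.Repr K (ry.right j) τ6) :
    mulBeta β (mulBeta β (x ⊗ₜ[K] y) ⊗ₜ[K] z)
    = ∑ i ∈ rx.index, ∑ j ∈ ry.index, ∑ n ∈ rz.index,
        (∑ p ∈ (rx1 i).index, ∑ q ∈ (ry1 j).index,
          β ((rx1 i).left p ⊗ₜ[K] (ry1 j).left q) *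
            β (((rx1 i).right p * (ry1 j).right q) ⊗ₜ[K] rz.left n))
        • (rx.right i * ry.right j * rz.right n) := by
  rw [mulBeta_tmul β rx ry]
  simp only [TensorProduct.sum_tmul, map_sum]
  trans ∑ i ∈ rx.index, ∑ j ∈ ry.index, ∑ k ∈ (rx2 i).index, ∑ l ∈ (ry2 j).index,
      ∑ n ∈ rz.index, β (rx.left i ⊗ₜ[K] ry.left j) •
        (β (((rx2 i).left k * (ry2 j).left l) ⊗ₜ[K] rz.left n) •
          ((rx2 i).right k * (ry2 j).right l * rz.right n))
  · refine Finset.sum_congr rfl fun i _ => Finset.sum_congr rfl fun j _ => ?_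
    rw [← TensorProduct.smul_tmul', LinearMap.map_smul,
      mulBeta_tmul_mulLeft β (rx2 i) (ry2 j) rz]
    simp only [Finset.smul_sum]
  trans ∑ j ∈ ry.index, ∑ l ∈ (ry2 j).index, ∑ n ∈ rz.index, ∑ i ∈ rx.index,
      ∑ k ∈ (rx2 i).index, β (rx.left i ⊗ₜ[K] ry.left j) •
        (β (((rx2 i).left k * (ry2 j).left l) ⊗ₜ[K] rz.left n) •
          ((rx2 i).right k * (ry2 j).right l * rz.right n))
  · exact reorderL1 _ _ _ _ _ _
  trans ∑ j ∈ ry.index, ∑ l ∈ (ry2 j).index, ∑ n ∈ rz.index, ∑ i ∈ rx.index,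
      ∑ p ∈ (rx1 i).index, β ((rx1 i).left p ⊗ₜ[K] ry.left j) •
        (β (((rx1 i).right p * (ry2 j).left l) ⊗ₜ[K] rz.left n) •
          (rx.right i * (ry2 j).right l * rz.right n))
  · refine Finset.sum_congr rfl fun j _ => Finset.sum_congr rfl fun l _ =>
      Finset.sum_congr rfl fun n _ => ?_
    exact transport_x β rx rx1 rx2 (ry.left j) ((ry2 j).left l) ((ry2 j).right l)
      (rz.left n) (rz.right n)
  trans ∑ n ∈ rz.index, ∑ i ∈ rx.index, ∑ p ∈ (rx1 i).index, ∑ j ∈ ry.index,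
      ∑ l ∈ (ry2 j).index, β ((rx1 i).left p ⊗ₜ[K] ry.left j) •
        (β (((rx1 i).right p * (ry2 j).left l) ⊗ₜ[K] rz.left n) •
          (rx.right i * (ry2 j).right l * rz.right n))
  · exact reorderL2 _ _ _ _ _ _
  trans ∑ n ∈ rz.index, ∑ i ∈ rx.index, ∑ p ∈ (rx1 i).index, ∑ j ∈ ry.index,
      ∑ q ∈ (ry1 j).index, β ((rx1 i).left p ⊗ₜ[K] (ry1 j).left q) •
        (β (((rx1 i).right p * (ry1 j).right q) ⊗ₜ[K] rz.left n) •
          (rx.right i * ry.right j * rz.right n))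
  · refine Finset.sum_congr rfl fun n _ => Finset.sum_congr rfl fun i _ =>
      Finset.sum_congr rfl fun p _ => ?_
    exact transport_y β ry ry1 ry2 ((rx1 i).left p) ((rx1 i).right p) (rx.right i)
      (rz.left n) (rz.right n)
  trans ∑ i ∈ rx.index, ∑ j ∈ ry.index, ∑ n ∈ rz.index, ∑ p ∈ (rx1 i).index,
      ∑ q ∈ (ry1 j).index, β ((rx1 i).left p ⊗ₜ[K] (ry1 j).left q) •
        (β (((rx1 i).right p * (ry1 j).right q) ⊗ₜ[K] rz.left n) •
          (rx.right i * ry.right j * rz.right n))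
  · exact reorderL3 _ _ _ _ _ _
  simp only [Finset.sum_smul, mul_smul]

set_option maxHeartbeats 1000000 in
lemma right_expand (β : (A ⊗[K] A) →ₗ[K] K) {x y z : A}
    (rx : Coalgebra.Repr K x τ0) (ry : Coalgebra.Repr K y τ1) (rz : Coalgebra.Repr K z τ2)
    (ry1 : ∀ j, Coalgebra.Repr K (ry.left j) τ3) (ry2 : ∀ j, Coalgebra.Repr K (ry.right j) τ4)
    (rz1 : ∀ n, Coalgebra.Repr K (rz.left n) τ5) (rz2 : ∀ n, Coalgebra.Repr K (rz.right n) τ6) :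
    mulBeta β (x ⊗ₜ[K] mulBeta β (y ⊗ₜ[K] z))
    = ∑ i ∈ rx.index, ∑ j ∈ ry.index, ∑ n ∈ rz.index,
        (∑ q ∈ (ry1 j).index, ∑ r ∈ (rz1 n).index,
          β ((ry1 j).left q ⊗ₜ[K] (rz1 n).left r) *
            β (rx.left i ⊗ₜ[K] ((ry1 j).right q * (rz1 n).right r)))
        • (rx.right i * (ry.right j * rz.right n)) := by
  rw [mulBeta_tmul β ry rz]
  simp only [TensorProduct.tmul_sum, map_sum]
  trans ∑ j ∈ ry.index, ∑ n ∈ rz.index, ∑ i ∈ rx.index, ∑ k ∈ (ry2 j).index,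
      ∑ l ∈ (rz2 n).index, β (ry.left j ⊗ₜ[K] rz.left n) •
        (β (rx.left i ⊗ₜ[K] ((ry2 j).left k * (rz2 n).left l)) •
          (rx.right i * ((ry2 j).right k * (rz2 n).right l)))
  · refine Finset.sum_congr rfl fun j _ => Finset.sum_congr rfl fun n _ => ?_
    rw [TensorProduct.tmul_smul, LinearMap.map_smul,
      mulBeta_tmul_mulRight β rx (ry2 j) (rz2 n)]
    simp only [Finset.smul_sum]
  trans ∑ n ∈ rz.index, ∑ l ∈ (rz2 n).index, ∑ i ∈ rx.index, ∑ j ∈ ry.index,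
      ∑ k ∈ (ry2 j).index, β (ry.left j ⊗ₜ[K] rz.left n) •
        (β (rx.left i ⊗ₜ[K] ((ry2 j).left k * (rz2 n).left l)) •
          (rx.right i * ((ry2 j).right k * (rz2 n).right l)))
  · exact reorderR1 _ _ _ _ _ _
  trans ∑ n ∈ rz.index, ∑ l ∈ (rz2 n).index, ∑ i ∈ rx.index, ∑ j ∈ ry.index,
      ∑ q ∈ (ry1 j).index, β ((ry1 j).left q ⊗ₜ[K] rz.left n) •
        (β (rx.left i ⊗ₜ[K] ((ry1 j).right q * (rz2 n).left l)) •
          (rx.right i * (ry.right j * (rz2 n).right l)))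
  · refine Finset.sum_congr rfl fun n _ => Finset.sum_congr rfl fun l _ =>
      Finset.sum_congr rfl fun i _ => ?_
    exact transport_y' β ry ry1 ry2 (rx.left i) (rx.right i) (rz.left n)
      ((rz2 n).left l) ((rz2 n).right l)
  trans ∑ i ∈ rx.index, ∑ j ∈ ry.index, ∑ q ∈ (ry1 j).index, ∑ n ∈ rz.index,
      ∑ l ∈ (rz2 n).index, β ((ry1 j).left q ⊗ₜ[K] rz.left n) •
        (β (rx.left i ⊗ₜ[K] ((ry1 j).right q * (rz2 n).left l)) •
          (rx.right i * (ry.right j * (rz2 n).right l)))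
  · exact reorderR2 _ _ _ _ _ _
  trans ∑ i ∈ rx.index, ∑ j ∈ ry.index, ∑ q ∈ (ry1 j).index, ∑ n ∈ rz.index,
      ∑ r ∈ (rz1 n).index, β ((ry1 j).left q ⊗ₜ[K] (rz1 n).left r) •
        (β (rx.left i ⊗ₜ[K] ((ry1 j).right q * (rz1 n).right r)) •
          (rx.right i * (ry.right j * rz.right n)))
  · refine Finset.sum_congr rfl fun i _ => Finset.sum_congr rfl fun j _ =>
      Finset.sum_congr rfl fun q _ => ?_
    exact transport_z' β rz rz1 rz2 (rx.left i) (rx.right i) ((ry1 j).left q)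
      ((ry1 j).right q) (ry.right j)
  trans ∑ i ∈ rx.index, ∑ j ∈ ry.index, ∑ n ∈ rz.index, ∑ q ∈ (ry1 j).index,
      ∑ r ∈ (rz1 n).index, β ((ry1 j).left q ⊗ₜ[K] (rz1 n).left r) •
        (β (rx.left i ⊗ₜ[K] ((ry1 j).right q * (rz1 n).right r)) •
          (rx.right i * (ry.right j * rz.right n)))
  · exact reorderR3 _ _ _ _ _ _
  simp only [Finset.sum_smul, mul_smul]

lemma conv3_lhs_collapsed (β : (A ⊗[K] A) →ₗ[K] K) {x y z : A}
    (rx : Coalgebra.Repr K x τ0) (ry : Coalgebra.Repr K y τ1) (rz : Coalgebra.Repr K z τ2) :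
    conv3 ((TensorProduct.lid K K).toLinearMap ∘ₗ TensorProduct.map Coalgebra.counit β)
      (β ∘ₗ TensorProduct.map LinearMap.id (LinearMap.mul' K A)) (x ⊗ₜ[K] (y ⊗ₜ[K] z))
    = ∑ j ∈ ry.index, ∑ n ∈ rz.index,
        β (ry.left j ⊗ₜ[K] rz.left n) * β (x ⊗ₜ[K] (ry.right j * rz.right n)) := by
  rw [conv3_tmul _ _ rx ry rz]
  simp only [LinearMap.comp_apply, TensorProduct.map_tmul, LinearEquiv.coe_coe,
    TensorProduct.lid_tmul, LinearMap.mul'_apply, LinearMap.id_coe, id_eq, smul_eq_mul]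
  rw [(sum3_rev rx.index ry.index rz.index _).symm]
  refine Finset.sum_congr rfl fun j _ => Finset.sum_congr rfl fun n _ => ?_
  have hc := collapse_left (β ∘ₗ (TensorProduct.mk K A A).flip (ry.right j * rz.right n)) rx
  simp only [LinearMap.comp_apply, LinearMap.flip_apply, TensorProduct.mk_apply,
    smul_eq_mul] at hc
  calc ∑ i ∈ rx.index, Coalgebra.counit (rx.left i) * β (ry.left j ⊗ₜ[K] rz.left n) *
        β (rx.right i ⊗ₜ[K] (ry.right j * rz.right n))
      = β (ry.left j ⊗ₜ[K] rz.left n) * ∑ i ∈ rx.index, Coalgebra.counit (rx.left i) *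
          β (rx.right i ⊗ₜ[K] (ry.right j * rz.right n)) := by
        rw [Finset.mul_sum]; exact Finset.sum_congr rfl fun i _ => by ring
    _ = _ := by rw [hc]

lemma conv3_rhs_collapsed (β : (A ⊗[K] A) →ₗ[K] K) {x y z : A}
    (rx : Coalgebra.Repr K x τ0) (ry : Coalgebra.Repr K y τ1) (rz : Coalgebra.Repr K z τ2) :
    conv3 (((TensorProduct.lid K K).toLinearMap ∘ₗ TensorProduct.map β Coalgebra.counit)
        ∘ₗ (TensorProduct.assoc K A A A).symm.toLinearMap)
      ((β ∘ₗ TensorProduct.map (LinearMap.mul' K A) LinearMap.id) ∘ₗ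
        (TensorProduct.assoc K A A A).symm.toLinearMap) (x ⊗ₜ[K] (y ⊗ₜ[K] z))
    = ∑ i ∈ rx.index, ∑ j ∈ ry.index,
        β (rx.left i ⊗ₜ[K] ry.left j) * β ((rx.right i * ry.right j) ⊗ₜ[K] z) := by
  rw [conv3_tmul _ _ rx ry rz]
  simp only [LinearMap.comp_apply, LinearEquiv.coe_coe, TensorProduct.assoc_symm_tmul,
    TensorProduct.map_tmul, TensorProduct.lid_tmul, LinearMap.mul'_apply,
    LinearMap.id_coe, id_eq, smul_eq_mul]
  refine Finset.sum_congr rfl fun i _ => Finset.sum_congr rfl fun j _ => ?_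
  have hc := collapse_left (β ∘ₗ TensorProduct.mk K A A (rx.right i * ry.right j)) rz
  simp only [LinearMap.comp_apply, TensorProduct.mk_apply, smul_eq_mul] at hc
  calc ∑ n ∈ rz.index, β (rx.left i ⊗ₜ[K] ry.left j) * Coalgebra.counit (rz.left n) *
        β ((rx.right i * ry.right j) ⊗ₜ[K] rz.right n)
      = β (rx.left i ⊗ₜ[K] ry.left j) * ∑ n ∈ rz.index, Coalgebra.counit (rz.left n) *
          β ((rx.right i * ry.right j) ⊗ₜ[K] rz.right n) := by
        rw [Finset.mul_sum]; exact Finset.sum_congr rfl fun n _ => by ring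
    _ = _ := by rw [hc]

lemma cocycle_pointwise (β : (A ⊗[K] A) →ₗ[K] K)
    (H : IsCocycleEq (LinearMap.mul' K A) β) {x y z : A}
    (rx : Coalgebra.Repr K x τ0) (ry : Coalgebra.Repr K y τ1) (rz : Coalgebra.Repr K z τ2) :
    ∑ j ∈ ry.index, ∑ n ∈ rz.index,
        β (ry.left j ⊗ₜ[K] rz.left n) * β (x ⊗ₜ[K] (ry.right j * rz.right n))
    = ∑ i ∈ rx.index, ∑ j ∈ ry.index,
        β (rx.left i ⊗ₜ[K] ry.left j) * β ((rx.right i * ry.right j) ⊗ₜ[K] z) := by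
  have h := LinearMap.congr_fun H (x ⊗ₜ[K] (y ⊗ₜ[K] z))
  rwa [conv3_lhs_collapsed β rx ry rz, conv3_rhs_collapsed β rx ry rz] at h

lemma counit_mulBeta_right (β : (A ⊗[K] A) →ₗ[K] K) {x y z : A}
    (ry : Coalgebra.Repr K y τ0) (rz : Coalgebra.Repr K z τ1) :
    Coalgebra.counit (R := K) (mulBeta β (x ⊗ₜ[K] mulBeta β (y ⊗ₜ[K] z)))
    = ∑ j ∈ ry.index, ∑ n ∈ rz.index,
        β (ry.left j ⊗ₜ[K] rz.left n) * β (x ⊗ₜ[K] (ry.right j * rz.right n)) := by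
  rw [mulBeta_tmul β ry rz]
  simp only [TensorProduct.tmul_sum, map_sum, TensorProduct.tmul_smul, LinearMap.map_smul,
    smul_eq_mul]
  exact Finset.sum_congr rfl fun j _ => Finset.sum_congr rfl fun n _ => by
    rw [counit_mulBeta β (Coalgebra.Repr.arbitrary K x) (Coalgebra.Repr.arbitrary K _)]

lemma counit_mulBeta_left (β : (A ⊗[K] A) →ₗ[K] K) {x y z : A}
    (rx : Coalgebra.Repr K x τ0) (ry : Coalgebra.Repr K y τ1) :
    Coalgebra.counit (R := K) (mulBeta β (mulBeta β (x ⊗ₜ[K] y) ⊗ₜ[K] z))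
    = ∑ i ∈ rx.index, ∑ j ∈ ry.index,
        β (rx.left i ⊗ₜ[K] ry.left j) * β ((rx.right i * ry.right j) ⊗ₜ[K] z) := by
  rw [mulBeta_tmul β rx ry]
  simp only [TensorProduct.sum_tmul, map_sum]
  refine Finset.sum_congr rfl fun i _ => Finset.sum_congr rfl fun j _ => ?_
  rw [← TensorProduct.smul_tmul', LinearMap.map_smul, LinearMap.map_smul,
    counit_mulBeta β (Coalgebra.Repr.arbitrary K _) (Coalgebra.Repr.arbitrary K z),
    smul_eq_mul]

lemma mulBeta_one_right (β : (A ⊗[K] A) →ₗ[K] K) (hU : IsUnital β) (x : A) :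
    mulBeta β (x ⊗ₜ[K] (1 : A)) = x := by
  rw [mulBeta_tmul β (Coalgebra.Repr.arbitrary K x) reprOne]
  simp only [reprOne_index, reprOne_left, reprOne_right, Finset.sum_singleton, mul_one]
  have hc := collapse_left (LinearMap.id (R := K) (M := A)) (Coalgebra.Repr.arbitrary K x)
  simp only [LinearMap.id_coe, id_eq] at hc
  refine Eq.trans (Finset.sum_congr rfl fun i _ => ?_) hc
  rw [(hU _).1]

lemma mulBeta_one_left (β : (A ⊗[K] A) →ₗ[K] K) (hU : IsUnital β) (x : A) :
    mulBeta β ((1 : A) ⊗ₜ[K] x) = x := by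
  rw [mulBeta_tmul β reprOne (Coalgebra.Repr.arbitrary K x)]
  simp only [reprOne_index, reprOne_left, reprOne_right, Finset.sum_singleton, one_mul]
  have hc := collapse_left (LinearMap.id (R := K) (M := A)) (Coalgebra.Repr.arbitrary K x)
  simp only [LinearMap.id_coe, id_eq] at hc
  refine Eq.trans (Finset.sum_congr rfl fun i _ => ?_) hc
  rw [(hU _).2]

theorem isCocycle_iff_mulBeta_assoc_unital' (β : (A ⊗[K] A) →ₗ[K] K) :
    (IsCocycleEq (LinearMap.mul' K A) β ∧ IsUnital β) ↔
      ((∀ x y z : A,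
          mulBeta β (mulBeta β (x ⊗ₜ[K] y) ⊗ₜ[K] z) =
            mulBeta β (x ⊗ₜ[K] mulBeta β (y ⊗ₜ[K] z))) ∧
        (∀ x : A, mulBeta β (x ⊗ₜ[K] (1 : A)) = x ∧
          mulBeta β ((1 : A) ⊗ₜ[K] x) = x)) := by
  constructor
  · rintro ⟨Hc, Hu⟩
    refine ⟨fun x y z => ?_, fun x => ⟨mulBeta_one_right β Hu x, mulBeta_one_left β Hu x⟩⟩
    rw [left_expand β (ℛ K x) (ℛ K y) (ℛ K z)
        (fun i => ℛ K _) (fun i => ℛ K _) (fun j => ℛ K _) (fun j => ℛ K _),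
      right_expand β (ℛ K x) (ℛ K y) (ℛ K z)
        (fun j => ℛ K _) (fun j => ℛ K _) (fun n => ℛ K _) (fun n => ℛ K _)]
    refine Finset.sum_congr rfl fun i _ => Finset.sum_congr rfl fun j _ =>
      Finset.sum_congr rfl fun n _ => ?_
    rw [mul_assoc]
    congr 1
    exact (cocycle_pointwise β Hc (ℛ K ((ℛ K x).left i)) (ℛ K ((ℛ K y).left j))
      (ℛ K ((ℛ K z).left n))).symm
  · rintro ⟨Ha, Hu⟩
    constructor
    · refine TensorProduct.ext' fun a w => ?_
      induction w using TensorProduct.induction_on with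
      | zero => simp
      | tmul b c =>
        rw [conv3_lhs_collapsed β (ℛ K a) (ℛ K b) (ℛ K c),
          conv3_rhs_collapsed β (ℛ K a) (ℛ K b) (ℛ K c),
          ← counit_mulBeta_right β (ℛ K b) (ℛ K c),
          ← counit_mulBeta_left β (ℛ K a) (ℛ K b), Ha a b c]
      | add u v hu hv => simp only [TensorProduct.tmul_add, map_add, hu, hv]
    · intro x
      have h1 := congrArg (Coalgebra.counit (R := K)) (Hu x).1
      rw [counit_mulBeta β (ℛ K x) reprOne] at h1
      have h2 := congrArg (Coalgebra.counit (R := K)) (Hu x).2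
      rw [counit_mulBeta β reprOne (ℛ K x)] at h2
      exact ⟨h1, h2⟩

end Aux

/-- `β` satisfies the unital 2-cocycle conditions if and only if the
twisted multiplication `*_β` makes `A` an associative unital algebra with unit `1_A`. -/
theorem isCocycle_iff_mulBeta_assoc_unital [CommRing K] [Ring A]
    [Bialgebra K A] (β : (A ⊗[K] A) →ₗ[K] K) :
    (IsCocycleEq (LinearMap.mul' K A) β ∧ IsUnital β) ↔
      ((∀ x y z : A,
          mulBeta β (mulBeta β (x ⊗ₜ[K] y) ⊗ₜ[K] z) =
            mulBeta β (x ⊗ₜ[K] mulBeta β (y ⊗ₜ[K] z))) ∧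
        (∀ x : A, mulBeta β (x ⊗ₜ[K] (1 : A)) = x ∧
          mulBeta β ((1 : A) ⊗ₜ[K] x) = x)) := by
  exact isCocycle_iff_mulBeta_assoc_unital' β
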